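/- In the platform game, suppose there exists Δ > 0 such that for every strategy profile f ∈ {1,…,M}^N there exist a platform i and a model m with U_i((m; f_{−i})) ≥ U_i(f) + Δ (strict nonexistence of pure Nash equilibrium for the hardmax game). Then there exists τ_0 > 0 such that for every τ with 0 < τ ≤ τ_0, the softmax game at temperature τ admits no pure Nash equilibrium; indeed, for every profile f there exist a platform i and a model m with U_i^soft((m; f_{−i}); τ) > U_i^soft(f; τ). -/

import Mathlib

open Finset

noncomputable section

/-- `𝔸_f(θ)`: the set of platforms attaining the maximal score for user type `θ`
under the strategy profile `f`. -/
def attains {Θ : Type*} [Fintype Θ] {M N : ℕ} (S : Fin M → Θ → ℝ)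
    (f : Fin N → Fin M) (θ : Θ) : Finset (Fin N) :=
  Finset.univ.filter fun i => ∀ k : Fin N, S (f k) θ ≤ S (f i) θ

/-- Hardmax user-choice probability `p_i(θ; f)`. -/
def hardP {Θ : Type*} [Fintype Θ] {M N : ℕ} (S : Fin M → Θ → ℝ)
    (f : Fin N → Fin M) (θ : Θ) (i : Fin N) : ℝ :=
  if i ∈ attains S f θ then 1 / (attains S f θ).card else 0

/-- Platform `i`'s utility `U_i(f)` in the hardmax platform game. -/
def util {Θ : Type*} [Fintype Θ] {M N : ℕ} (π : Θ → ℝ) (S : Fin M → Θ → ℝ)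
    (f : Fin N → Fin M) (i : Fin N) : ℝ :=
  ∑ θ, π θ * hardP S f θ i * S (f i) θ

/-- Softmax user-choice probability `p_i^soft(θ; f, τ)` at temperature `τ`. -/
def softP {Θ : Type*} [Fintype Θ] {M N : ℕ} (S : Fin M → Θ → ℝ) (τ : ℝ)
    (f : Fin N → Fin M) (θ : Θ) (i : Fin N) : ℝ :=
  Real.exp (S (f i) θ / τ) / ∑ k : Fin N, Real.exp (S (f k) θ / τ)

/-- Softmax utility `U_i^soft(f; τ)` of platform `i`. -/
def softU {Θ : Type*} [Fintype Θ] {M N : ℕ} (π : Θ → ℝ) (S : Fin M → Θ → ℝ)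
    (τ : ℝ) (f : Fin N → Fin M) (i : Fin N) : ℝ :=
  ∑ θ, π θ * softP S τ f θ i * S (f i) θ

open Filter Topology in
lemma exp_div_tendsto_aux15 (c : ℝ) (hc : c ≤ 0) :
    Tendsto (fun τ : ℝ => Real.exp (c / τ)) (𝓝[>] 0)
      (𝓝 (if c = 0 then 1 else 0)) := by
  rcases eq_or_lt_of_le hc with h | h
  · subst h
    simpa using tendsto_const_nhds
  · rw [if_neg h.ne]
    apply Real.tendsto_exp_atBot.comp
    have := tendsto_inv_nhdsGT_zero.const_mul_atTop_of_neg h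
    exact this.congr fun x => (div_eq_mul_inv c x).symm

open Filter Topology in
lemma softP_tendsto_aux15 {Θ : Type*} [Fintype Θ] {M N : ℕ} [NeZero N]
    (S : Fin M → Θ → ℝ) (f : Fin N → Fin M) (θ : Θ) (i : Fin N) :
    Tendsto (fun τ => softP S τ f θ i) (𝓝[>] (0:ℝ)) (𝓝 (hardP S f θ i)) := by
  have hne : (Finset.univ : Finset (Fin N)).Nonempty := univ_nonempty
  set s : ℝ := Finset.univ.sup' hne (fun k => S (f k) θ) with hs
  have hle : ∀ k, S (f k) θ ≤ s := fun k => le_sup' (fun k => S (f k) θ) (mem_univ k)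
  have hmem : ∀ k, k ∈ attains S f θ ↔ S (f k) θ = s := by
    intro k
    simp only [attains, mem_filter, mem_univ, true_and]
    constructor
    · intro h
      exact le_antisymm (hle k) (sup'_le _ _ fun j _ => h j)
    · intro h j
      rw [h]; exact hle j
  have hfilter : Finset.univ.filter (fun k => S (f k) θ = s) = attains S f θ := by
    ext k; simp [hmem k, mem_filter]
  have hcardpos : 0 < ((attains S f θ).card : ℝ) := by
    obtain ⟨b, -, hb⟩ := exists_mem_eq_sup' hne (fun k => S (f k) θ)
    have : b ∈ attains S f θ := (hmem b).2 hb.symm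
    exact_mod_cast card_pos.2 ⟨b, this⟩
  have hcong : ∀ τ ∈ Set.Ioi (0:ℝ),
      softP S τ f θ i
      = Real.exp ((S (f i) θ - s) / τ) / ∑ k : Fin N, Real.exp ((S (f k) θ - s) / τ) := by
    intro τ hτ
    have hE : Real.exp (s / τ) ≠ 0 := (Real.exp_pos _).ne'
    have hsum : (∑ k : Fin N, Real.exp ((S (f k) θ - s) / τ))
        = (∑ k : Fin N, Real.exp (S (f k) θ / τ)) / Real.exp (s / τ) := by
      rw [sum_div]
      exact Finset.sum_congr rfl fun k _ => by rw [sub_div, Real.exp_sub]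
    rw [softP, hsum, sub_div, Real.exp_sub, div_div_div_cancel_right₀]
    exact hE
  have hnum : Tendsto (fun τ => Real.exp ((S (f i) θ - s) / τ)) (𝓝[>] (0:ℝ))
      (𝓝 (if S (f i) θ = s then 1 else 0)) := by
    have := exp_div_tendsto_aux15 (S (f i) θ - s) (sub_nonpos.2 (hle i))
    simpa [sub_eq_zero] using this
  have hden : Tendsto (fun τ => ∑ k : Fin N, Real.exp ((S (f k) θ - s) / τ)) (𝓝[>] (0:ℝ))
      (𝓝 ((attains S f θ).card : ℝ)) := by
    have h1 : Tendsto (fun τ => ∑ k : Fin N, Real.exp ((S (f k) θ - s) / τ)) (𝓝[>] (0:ℝ))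
        (𝓝 (∑ k : Fin N, if S (f k) θ = s then (1:ℝ) else 0)) := by
      apply tendsto_finset_sum
      intro k _
      have := exp_div_tendsto_aux15 (S (f k) θ - s) (sub_nonpos.2 (hle k))
      simpa [sub_eq_zero] using this
    have h2 : (∑ k : Fin N, if S (f k) θ = s then (1:ℝ) else 0)
        = ((attains S f θ).card : ℝ) := by
      rw [Finset.sum_boole, hfilter]
    rwa [h2] at h1
  have := hnum.div hden hcardpos.ne'
  have hfin := Tendsto.congr' (Filter.eventuallyEq_of_mem self_mem_nhdsWithin
      (fun τ hτ => (hcong τ hτ).symm)) this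
  convert hfin using 2
  rw [hardP]
  by_cases h : i ∈ attains S f θ
  · rw [if_pos h, if_pos ((hmem i).1 h)]
  · rw [if_neg h, if_neg (fun hh => h ((hmem i).2 hh)), zero_div]

open Filter Topology in
lemma softU_tendsto_aux15 {Θ : Type*} [Fintype Θ] {M N : ℕ} [NeZero N]
    (π : Θ → ℝ) (S : Fin M → Θ → ℝ) (f : Fin N → Fin M) (i : Fin N) :
    Tendsto (fun τ => softU π S τ f i) (𝓝[>] (0:ℝ)) (𝓝 (util π S f i)) := by
  apply tendsto_finset_sum
  intro θ _
  exact (((softP_tendsto_aux15 S f θ i).const_mul (π θ)).mul_const (S (f i) θ))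

open Filter Topology in
/-- if the hardmax game admits no PNE in the strict sense (every profile
has a deviation improving utility by at least `Δ > 0`), then for all sufficiently small
temperatures the softmax game admits no pure Nash equilibrium: every profile has a
strictly profitable deviation. -/
theorem stmt15 {Θ : Type*} [Fintype Θ] [Nonempty Θ] {M N : ℕ}
    (hM : 1 ≤ M) (hN : 1 ≤ N)
    (π : Θ → ℝ) (hπ0 : ∀ θ, 0 ≤ π θ) (hπ1 : ∑ θ, π θ = 1)
    (S : Fin M → Θ → ℝ)
    (Δ : ℝ) (hΔ : 0 < Δ)
    (hhard : ∀ f : Fin N → Fin M, ∃ (i : Fin N) (m : Fin M),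
      util π S f i + Δ ≤ util π S (Function.update f i m) i) :
    ∃ τ₀ : ℝ, 0 < τ₀ ∧
      ∀ τ : ℝ, 0 < τ → τ ≤ τ₀ →
        ∀ f : Fin N → Fin M, ∃ (i : Fin N) (m : Fin M),
          softU π S τ f i < softU π S τ (Function.update f i m) i := by
  haveI : NeZero N := ⟨by omega⟩
  choose I Mo hIM using hhard
  have key : ∀ f : Fin N → Fin M, ∀ᶠ τ in 𝓝[>] (0:ℝ),
      softU π S τ f (I f) < softU π S τ (Function.update f (I f) (Mo f)) (I f) := by
    intro f
    have h1 := softU_tendsto_aux15 π S f (I f)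
    have h2 := softU_tendsto_aux15 π S (Function.update f (I f) (Mo f)) (I f)
    have hlt : util π S f (I f) < util π S (Function.update f (I f) (Mo f)) (I f) :=
      lt_of_lt_of_le (by linarith [hΔ]) (hIM f)
    have := (h2.sub h1).eventually (eventually_gt_nhds (by linarith : (0:ℝ) <
      util π S (Function.update f (I f) (Mo f)) (I f) - util π S f (I f)))
    filter_upwards [this] with τ hτ
    linarith
  have hall : ∀ᶠ τ in 𝓝[>] (0:ℝ), ∀ f : Fin N → Fin M,
      softU π S τ f (I f) < softU π S τ (Function.update f (I f) (Mo f)) (I f) :=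
    eventually_all.2 key
  obtain ⟨u, hu, hsub⟩ := mem_nhdsGT_iff_exists_Ioc_subset.1 hall
  refine ⟨u, hu, fun τ hτ0 hτu f => ⟨I f, Mo f, ?_⟩⟩
  exact hsub ⟨hτ0, hτu⟩ f
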